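/- arXiv:1609.05086 — 3 statements merged into one kernel-verified Lean document; each statement's English description precedes it below -/
import Mathlib

section
/- Let G be a discrete group. If G has a non-amenable subgroup H such that for every h ∈ G ∖ {e} the group {g ∈ H : ghg⁻¹ = h} is amenable, then G is not inner amenable. -/
noncomputable section

/-- A group is amenable if there is a finitely additive probability measure, defined on
all subsets of `G`, which is invariant under left translation. -/
def AmenableGroup (G : Type*) [Group G] : Prop :=
  ∃ m : Set G → ℝ,
    (∀ A, 0 ≤ m A) ∧ m Set.univ = 1 ∧
    (∀ A B, Disjoint A B → m (A ∪ B) = m A + m B) ∧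
    ∀ (g : G) (A : Set G), m ((fun x => g * x) '' A) = m A

lemma conj_ne_one' {G : Type*} [Group G] (g : G) {x : G} (hx : x ≠ 1) :
    g * x * g⁻¹ ≠ 1 := by
  intro h
  apply hx
  have h' := congrArg (fun y => g⁻¹ * y * g) h
  simpa [mul_assoc] using h'

/-- A discrete group `G` is inner amenable if there is a finitely additive probability
measure, defined on all subsets of `G \ {e}`, which is invariant under the conjugation
action of `G`. -/
def InnerAmenable (G : Type*) [Group G] : Prop :=
  ∃ m : Set {x : G // x ≠ 1} → ℝ,
    (∀ A, 0 ≤ m A) ∧ m Set.univ = 1 ∧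
    (∀ A B, Disjoint A B → m (A ∪ B) = m A + m B) ∧
    ∀ (g : G) (A : Set {x : G // x ≠ 1}),
      m ((fun x : {x : G // x ≠ 1} =>
        (⟨g * ↑x * g⁻¹, conj_ne_one' g x.2⟩ : {x : G // x ≠ 1})) '' A) = m A

namespace IAaux


variable {X : Type*} (m : Set X → ℝ)

/-- "Integral" of a ℕ-valued function against a finitely additive measure. -/
def Jm (M : ℕ) (φ : X → ℕ) : ℝ := ∑ k ∈ Finset.range M, m {x | k < φ x}

variable (h0 : ∀ A, 0 ≤ m A)
  (hadd : ∀ A B, Disjoint A B → m (A ∪ B) = m A + m B)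

include hadd in
lemma m_empty : m ∅ = 0 := by
  have := hadd ∅ ∅ (disjoint_bot_left)
  simp at this; linarith

include h0 hadd in
lemma m_mono {A B : Set X} (h : A ⊆ B) : m A ≤ m B := by
  have hd : Disjoint A (B \ A) := Set.disjoint_sdiff_right
  have := hadd A (B \ A) hd
  rw [Set.union_diff_cancel h] at this
  have := h0 (B \ A)
  linarith

include h0 hadd in
lemma Jm_stable {N M M' : ℕ} {φ : X → ℕ} (hb : ∀ x, φ x ≤ N) (h1 : N ≤ M)
    (h2 : N ≤ M') : Jm m M φ = Jm m M' φ := by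
  have key : ∀ M'', N ≤ M'' → Jm m M'' φ = Jm m N φ := by
    intro M'' hM
    unfold Jm
    rw [← Finset.sum_subset (Finset.range_subset_range.2 hM)]
    intro k _ hk
    simp only [Finset.mem_range, not_lt] at hk
    have : {x | k < φ x} = ∅ := by
      ext x; simp only [Set.mem_setOf_eq, Set.mem_empty_iff_false, iff_false, not_lt]
      exact (hb x).trans hk
    rw [this, m_empty m hadd]
  rw [key M h1, key M' h2]

include h0 hadd in
lemma Jm_mono {M : ℕ} {φ ψ : X → ℕ} (h : ∀ x, φ x ≤ ψ x) :
    Jm m M φ ≤ Jm m M ψ := by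
  apply Finset.sum_le_sum
  intro k _
  exact m_mono m h0 hadd (fun x hx => lt_of_lt_of_le hx (h x))

omit hadd in
include h0 in
lemma Jm_nonneg {M : ℕ} {φ : X → ℕ} : 0 ≤ Jm m M φ :=
  Finset.sum_nonneg fun k _ => h0 _

include hadd in
lemma m_partition {φ : X → ℕ} (A : Set X) :
    ∀ n : ℕ, ∑ j ∈ Finset.range n, m (A ∩ {x | φ x = j}) = m (A ∩ {x | φ x < n}) := by
  intro n
  induction n with
  | zero => simp [m_empty m hadd]
  | succ n ih =>
    rw [Finset.sum_range_succ, ih]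
    rw [← hadd]
    · congr 1
      ext x
      simp only [Set.mem_union, Set.mem_inter_iff, Set.mem_setOf_eq]
      constructor
      · rintro (⟨hA, hlt⟩ | ⟨hA, heq⟩)
        · exact ⟨hA, hlt.trans (Nat.lt_succ_self n)⟩
        · exact ⟨hA, heq ▸ Nat.lt_succ_self n⟩
      · rintro ⟨hA, hlt⟩
        rcases Nat.lt_succ_iff_lt_or_eq.mp hlt with h | h
        · exact Or.inl ⟨hA, h⟩
        · exact Or.inr ⟨hA, h⟩
    · rw [Set.disjoint_iff]
      rintro x ⟨⟨_, h1⟩, ⟨_, h2⟩⟩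
      simp only [Set.mem_setOf_eq] at h1 h2
      omega

include h0 hadd in
lemma Jm_add_indicator {M : ℕ} (A : Set X) [DecidablePred (· ∈ A)] (χ : X → ℕ) (hb : ∀ x, χ x < M) :
    Jm m M (fun x => χ x + (if x ∈ A then 1 else 0)) = Jm m M χ + m A := by
  unfold Jm
  have key : ∀ k : ℕ, m {x | k < χ x + (if x ∈ A then 1 else 0)}
      = m {x | k < χ x} + m (A ∩ {x | χ x = k}) := by
    intro k
    rw [← hadd]
    · congr 1
      ext x
      simp only [Set.mem_setOf_eq, Set.mem_union, Set.mem_inter_iff]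
      by_cases hx : x ∈ A <;> simp [hx] <;> omega
    · rw [Set.disjoint_iff]
      rintro x ⟨h1, _, h2⟩
      simp only [Set.mem_setOf_eq] at *
      omega
  simp only [key]
  rw [Finset.sum_add_distrib]
  congr 1
  rw [m_partition m hadd A M]
  congr 1
  ext x
  simp only [Set.mem_inter_iff, Set.mem_setOf_eq, and_iff_left_iff_imp]
  exact fun _ => hb x

include h0 hadd in
lemma Jm_add {M N N' : ℕ} (φ ψ : X → ℕ) (hφ : ∀ x, φ x ≤ N) (hψ : ∀ x, ψ x ≤ N')
    (hM : N + N' < M) :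
    Jm m M (fun x => φ x + ψ x) = Jm m M φ + Jm m M ψ := by
  have key : ∀ r : ℕ, Jm m M (fun x => φ x + min (ψ x) r)
      = Jm m M φ + ∑ k ∈ Finset.range r, m {x | k < ψ x} := by
    intro r
    induction r with
    | zero => simp
    | succ r ih =>
      have heq : (fun x => φ x + min (ψ x) (r + 1))
          = fun x => (φ x + min (ψ x) r) + (if x ∈ {x | r < ψ x} then 1 else 0) := by
        funext x
        by_cases hx : r < ψ x <;> simp [hx, Set.mem_setOf_eq] <;> omega
      have hb : ∀ x, φ x + min (ψ x) r < M := fun x => by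
        have := hφ x; have := hψ x
        calc φ x + min (ψ x) r ≤ N + N' := by omega
        _ < M := hM
      have hind := Jm_add_indicator m h0 hadd {x | r < ψ x} (fun x => φ x + min (ψ x) r) hb
      rw [heq]
      refine hind.trans ?_
      rw [ih, Finset.sum_range_succ]
      ring
  have := key N'
  have hmin : (fun x => φ x + min (ψ x) N') = fun x => φ x + ψ x := by
    funext x; rw [min_eq_left (hψ x)]
  rw [hmin] at this
  rw [this]
  congr 1
  have : ∑ k ∈ Finset.range N', m {x | k < ψ x} = Jm m N' ψ := rfl
  rw [this]
  exact (Jm_stable m h0 hadd hψ (by omega) le_rfl).symm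


section RealIntegral

variable (h1 : m Set.univ = 1)

/-- Dyadic discretization of a `[0,1]`-valued function. -/
def phi (n : ℕ) (f : X → ℝ) : X → ℕ := fun x => ⌊(2:ℝ)^n * f x⌋₊

/-- Dyadic approximation to the integral. -/
def Tn (n : ℕ) (f : X → ℝ) : ℝ := Jm m (2^n) (phi n f) / 2^n

/-- The integral of a `[0,1]`-valued function against a finitely additive measure. -/
def Im (f : X → ℝ) : ℝ := ⨆ n, Tn m n f

omit h0 hadd in
lemma phi_le {n : ℕ} {f : X → ℝ} (hf1 : ∀ x, f x ≤ 1) (x : X) : phi n f x ≤ 2^n := by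
  have h2 : (2:ℝ)^n * f x ≤ ((2^n : ℕ) : ℝ) := by
    push_cast
    nlinarith [hf1 x, pow_pos (by norm_num : (0:ℝ) < 2) n]
  calc ⌊(2:ℝ)^n * f x⌋₊ ≤ ⌊((2^n : ℕ) : ℝ)⌋₊ := Nat.floor_mono h2
  _ = 2^n := Nat.floor_natCast _

include h0 hadd in
lemma Tn_eq_Jm {n M : ℕ} {f : X → ℝ} (hf1 : ∀ x, f x ≤ 1) (hM : 2^n ≤ M) :
    Tn m n f = Jm m M (phi n f) / 2^n := by
  unfold Tn
  rw [Jm_stable m h0 hadd (phi_le hf1) le_rfl hM]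

omit hadd in
include h0 in
lemma Tn_nonneg {n : ℕ} {f : X → ℝ} : 0 ≤ Tn m n f := by
  apply div_nonneg (Jm_nonneg m h0) (by positivity)

include h0 hadd h1 in
lemma Tn_le_one {n : ℕ} {f : X → ℝ} : Tn m n f ≤ 1 := by
  unfold Tn
  rw [div_le_one (by positivity)]
  calc Jm m (2^n) (phi n f) ≤ ∑ _k ∈ Finset.range (2^n), (1:ℝ) := by
        apply Finset.sum_le_sum
        intro k _
        calc m {x | k < phi n f x} ≤ m Set.univ :=
              m_mono m h0 hadd (Set.subset_univ _)
        _ = 1 := h1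
  _ = 2^n := by simp
  _ = (2:ℝ)^n := by push_cast; ring

include h0 hadd in
lemma Tn_mono {n : ℕ} {f : X → ℝ} (hf0 : ∀ x, 0 ≤ f x) (hf1 : ∀ x, f x ≤ 1) :
    Tn m n f ≤ Tn m (n+1) f := by
  set M := 2^(n+1) + 1 with hMdef
  have hps := pow_succ 2 n
  have hM1 : 2^n ≤ M := by omega
  have hM2 : 2^(n+1) ≤ M := by omega
  rw [Tn_eq_Jm m h0 hadd hf1 hM1, Tn_eq_Jm m h0 hadd hf1 hM2]
  have hdouble : ∀ x, 2 * phi n f x ≤ phi (n+1) f x := by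
    intro x
    apply Nat.le_floor
    have h1' : (⌊(2:ℝ)^n * f x⌋₊ : ℝ) ≤ (2:ℝ)^n * f x :=
      Nat.floor_le (mul_nonneg (by positivity) (hf0 x))
    push_cast
    calc ((2:ℝ) * ⌊(2:ℝ)^n * f x⌋₊) ≤ 2 * ((2:ℝ)^n * f x) := by linarith
    _ = (2:ℝ)^(n+1) * f x := by ring
  have hJ2 : Jm m M (fun x => phi n f x + phi n f x) = Jm m M (phi n f) + Jm m M (phi n f) :=
    Jm_add m h0 hadd _ _ (phi_le hf1) (phi_le hf1) (by omega)
  have hle : Jm m M (fun x => phi n f x + phi n f x) ≤ Jm m M (phi (n+1) f) :=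
    Jm_mono m h0 hadd (fun x => by have := hdouble x; omega)
  rw [hJ2] at hle
  have h2n : (0:ℝ) < 2^n := by positivity
  have h2n1 : (0:ℝ) < 2^(n+1) := by positivity
  rw [div_le_div_iff₀ h2n h2n1]
  have hpow : (2:ℝ)^(n+1) = 2 * 2^n := by ring
  rw [hpow]
  nlinarith [mul_le_mul_of_nonneg_right hle h2n.le]

include h0 hadd h1 in
lemma Tn_tendsto {f : X → ℝ} (hf0 : ∀ x, 0 ≤ f x) (hf1 : ∀ x, f x ≤ 1) :
    Filter.Tendsto (fun n => Tn m n f) Filter.atTop (nhds (Im m f)) := by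
  apply tendsto_atTop_ciSup
  · exact monotone_nat_of_le_succ (fun n => Tn_mono m h0 hadd hf0 hf1)
  · exact ⟨1, by rintro y ⟨n, rfl⟩; exact Tn_le_one m h0 hadd h1⟩

include h0 hadd h1 in
lemma Im_nonneg {f : X → ℝ} (hf0 : ∀ x, 0 ≤ f x) (hf1 : ∀ x, f x ≤ 1) : 0 ≤ Im m f :=
  le_of_tendsto_of_tendsto' tendsto_const_nhds (Tn_tendsto m h0 hadd h1 hf0 hf1)
    (fun n => Tn_nonneg m h0)

include h0 hadd h1 in
lemma Im_one : Im m (fun _ => 1) = 1 := by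
  have hT : ∀ n, Tn m n (fun _ => (1:ℝ)) = 1 := by
    intro n
    unfold Tn Jm
    have hphi : ∀ x : X, phi n (fun _ : X => (1:ℝ)) x = 2^n := by
      intro x
      unfold phi
      rw [mul_one]
      rw [show ((2:ℝ)^n) = ((2^n : ℕ) : ℝ) by push_cast; ring]
      exact Nat.floor_natCast _
    have hterm : ∀ k ∈ Finset.range (2^n), m {x | k < phi n (fun _ : X => (1:ℝ)) x} = 1 := by
      intro k hk
      simp only [Finset.mem_range] at hk
      have : {x | k < phi n (fun _ : X => (1:ℝ)) x} = Set.univ := by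
        ext x; simp [hphi x, hk]
      rw [this, h1]
    rw [Finset.sum_congr rfl hterm]
    rw [Finset.sum_const, Finset.card_range, nsmul_eq_mul, mul_one]
    rw [show ((2^n : ℕ) : ℝ) = (2:ℝ)^n by push_cast; ring]
    rw [div_self (by positivity)]
  unfold Im
  simp only [hT]
  exact ciSup_const

include h0 hadd h1 in
lemma Im_add {f g : X → ℝ} (hf0 : ∀ x, 0 ≤ f x) (hg0 : ∀ x, 0 ≤ g x)
    (hfg1 : ∀ x, f x + g x ≤ 1) :
    Im m (fun x => f x + g x) = Im m f + Im m g := by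
  have hf1 : ∀ x, f x ≤ 1 := fun x => by have := hfg1 x; have := hg0 x; linarith
  have hg1 : ∀ x, g x ≤ 1 := fun x => by have := hfg1 x; have := hf0 x; linarith
  have hfg0 : ∀ x, 0 ≤ f x + g x := fun x => by have := hf0 x; have := hg0 x; linarith
  -- pointwise floor estimates
  have hlow : ∀ n x, phi n f x + phi n g x ≤ phi n (fun x => f x + g x) x := by
    intro n x
    have h1' := Nat.floor_le (mul_nonneg (show (0:ℝ) ≤ (2:ℝ)^n by positivity) (hf0 x))
    have h2' := Nat.floor_le (mul_nonneg (show (0:ℝ) ≤ (2:ℝ)^n by positivity) (hg0 x))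
    show phi n f x + phi n g x ≤ ⌊(2:ℝ)^n * (f x + g x)⌋₊
    apply Nat.le_floor
    unfold phi
    push_cast
    nlinarith
  have hhigh : ∀ n x, phi n (fun x => f x + g x) x ≤ phi n f x + phi n g x + 1 := by
    intro n x
    have ha := Nat.lt_floor_add_one ((2:ℝ)^n * f x)
    have hb := Nat.lt_floor_add_one ((2:ℝ)^n * g x)
    have hlt : (2:ℝ)^n * (f x + g x) < ((⌊(2:ℝ)^n * f x⌋₊ + ⌊(2:ℝ)^n * g x⌋₊ + 2 : ℕ) : ℝ) := by
      push_cast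
      nlinarith
    have h2 := (Nat.floor_lt (mul_nonneg (show (0:ℝ) ≤ (2:ℝ)^n by positivity) (hfg0 x))).mpr hlt
    show ⌊(2:ℝ)^n * (f x + g x)⌋₊ ≤ ⌊(2:ℝ)^n * f x⌋₊ + ⌊(2:ℝ)^n * g x⌋₊ + 1
    omega
  -- sandwich for Tn
  have hsand : ∀ n, Tn m n f + Tn m n g ≤ Tn m n (fun x => f x + g x)
      ∧ Tn m n (fun x => f x + g x) ≤ Tn m n f + Tn m n g + 1/2^n := by
    intro n
    set M := 2^(n+1) + 2 with hMdef
    have hps := pow_succ 2 n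
    have hMn : 2^n ≤ M := by omega
    have hJadd : Jm m M (fun x => phi n f x + phi n g x)
        = Jm m M (phi n f) + Jm m M (phi n g) :=
      Jm_add m h0 hadd _ _ (phi_le hf1) (phi_le hg1) (by omega)
    haveI : DecidablePred (· ∈ (Set.univ : Set X)) := fun _ => Decidable.isTrue trivial
    have hJind : Jm m M (fun x => (phi n f x + phi n g x) +
          (if x ∈ (Set.univ : Set X) then 1 else 0))
        = Jm m M (fun x => phi n f x + phi n g x) + m Set.univ :=
      Jm_add_indicator m h0 hadd Set.univ _ (fun x => by
        have := phi_le hf1 (n := n) x; have := phi_le hg1 (n := n) x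
        omega)
    have hJlow : Jm m M (fun x => phi n f x + phi n g x)
        ≤ Jm m M (phi n (fun x => f x + g x)) :=
      Jm_mono m h0 hadd (hlow n)
    have hJhigh : Jm m M (phi n (fun x => f x + g x))
        ≤ Jm m M (fun x => phi n f x + phi n g x) + 1 := by
      have : Jm m M (phi n (fun x => f x + g x))
          ≤ Jm m M (fun x => (phi n f x + phi n g x) +
            (if x ∈ (Set.univ : Set X) then 1 else 0)) := by
        apply Jm_mono m h0 hadd
        intro x
        have := hhigh n x
        simp only [Set.mem_univ, if_true]
        omega
      rw [hJind, h1] at this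
      exact this
    have hTf := Tn_eq_Jm m h0 hadd hf1 hMn (n := n)
    have hTg := Tn_eq_Jm m h0 hadd hg1 hMn (n := n)
    have hTfg := Tn_eq_Jm m h0 hadd (f := fun x => f x + g x) hfg1 hMn (n := n)
    have hpow : (0:ℝ) < 2^n := by positivity
    constructor
    · rw [hTf, hTg, hTfg, ← add_div, div_le_div_iff₀ hpow hpow]
      rw [hJadd] at hJlow
      nlinarith
    · rw [hTf, hTg, hTfg]
      rw [hJadd] at hJhigh
      rw [← add_div, ← add_div, div_le_div_iff₀ hpow hpow]
      nlinarith
  -- limits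
  have hTf := Tn_tendsto m h0 hadd h1 hf0 hf1
  have hTg := Tn_tendsto m h0 hadd h1 hg0 hg1
  have hTfg := Tn_tendsto m h0 hadd h1 hfg0 hfg1
  have hlim1 : Filter.Tendsto (fun n => Tn m n f + Tn m n g) Filter.atTop
      (nhds (Im m f + Im m g)) := hTf.add hTg
  have hlim2 : Filter.Tendsto (fun n => Tn m n f + Tn m n g + 1/2^n) Filter.atTop
      (nhds (Im m f + Im m g)) := by
    have h2 : Filter.Tendsto (fun n : ℕ => (1:ℝ)/2^n) Filter.atTop (nhds 0) := by
      simp only [one_div, ← inv_pow]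
      exact tendsto_pow_atTop_nhds_zero_of_lt_one (by norm_num) (by norm_num)
    simpa using hlim1.add h2
  have : Filter.Tendsto (fun n => Tn m n (fun x => f x + g x)) Filter.atTop
      (nhds (Im m f + Im m g)) :=
    tendsto_of_tendsto_of_tendsto_of_le_of_le hlim1 hlim2
      (fun n => (hsand n).1) (fun n => (hsand n).2)
  exact tendsto_nhds_unique hTfg this

include h0 hadd h1 in
lemma Im_invariant {f : X → ℝ} (hf1 : ∀ x, f x ≤ 1) (e : X ≃ X)
    (minv : ∀ S : Set X, m (⇑e '' S) = m S) :
    Im m (fun x => f (e.symm x)) = Im m f := by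
  have hT : ∀ n, Tn m n (fun x => f (e.symm x)) = Tn m n f := by
    intro n
    unfold Tn Jm
    congr 1
    apply Finset.sum_congr rfl
    intro k _
    have hset : {x | k < phi n (fun x => f (e.symm x)) x} = ⇑e '' {x | k < phi n f x} := by
      rw [Equiv.image_eq_preimage_symm]
      ext x
      simp only [Set.mem_setOf_eq, Set.mem_preimage]
      rfl
    rw [hset, minv]
  unfold Im
  rw [funext hT]

end RealIntegral



variable {G : Type*} [Group G]

/-- The set of nonidentity elements. -/
abbrev Xne (G : Type*) [Group G] := {x : G // x ≠ 1}

/-- Conjugation action on nonidentity elements. -/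
def cG (g : G) : Xne G → Xne G := fun x =>
  (⟨g * ↑x * g⁻¹, conj_ne_one' g x.2⟩ : Xne G)

lemma cG_cG (g g' : G) (x : Xne G) : cG g (cG g' x) = cG (g * g') x := by
  apply Subtype.ext
  simp [cG, mul_assoc]

lemma cG_one (x : Xne G) : cG 1 x = x := by
  apply Subtype.ext
  simp [cG]

lemma cG_fix_iff (g : G) (x : Xne G) : cG g x = x ↔ (x : G) * g = g * x := by
  constructor
  · intro h
    have h2 : g * (x:G) * g⁻¹ = (x:G) := congrArg Subtype.val h
    exact (mul_inv_eq_iff_eq_mul.mp h2).symm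
  · intro h
    apply Subtype.ext
    show g * (x : G) * g⁻¹ = x
    rw [← h]
    group

/-- Conjugation as an equivalence. -/
def cEquiv (g : G) : Xne G ≃ Xne G where
  toFun := cG g
  invFun := cG g⁻¹
  left_inv := fun x => by rw [cG_cG, inv_mul_cancel, cG_one]
  right_inv := fun x => by rw [cG_cG, mul_inv_cancel, cG_one]

variable (H : Subgroup G)

/-- The orbit equivalence relation of the conjugation action of `H`. -/
def orbSetoid : Setoid (Xne G) where
  r x y := ∃ h : H, cG (h : G) x = y
  iseqv := by
    constructor
    · intro x; exact ⟨1, by simpa using cG_one x⟩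
    · rintro x y ⟨h, rfl⟩
      exact ⟨h⁻¹, by rw [show ((h⁻¹ : H) : G) = (h : G)⁻¹ from rfl, cG_cG, inv_mul_cancel, cG_one]⟩
    · rintro x y z ⟨h, rfl⟩ ⟨h', rfl⟩
      exact ⟨h' * h, by
        rw [show ((h' * h : H) : G) = (h' : G) * (h : G) from rfl, ← cG_cG]⟩

/-- A representative of the orbit of `x`. -/
def rep (x : Xne G) : Xne G := (@Quotient.mk _ (orbSetoid H) x).out

lemma rep_cG (h : H) (x : Xne G) : rep H (cG (h : G) x) = rep H x := by
  unfold rep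
  congr 1
  exact Quotient.sound (⟨h⁻¹, by rw [show ((h⁻¹ : H) : G) = (h : G)⁻¹ from rfl, cG_cG, inv_mul_cancel, cG_one]⟩ : (orbSetoid H).r _ _)

lemma rep_spec (x : Xne G) : ∃ h : H, cG (h : G) (rep H x) = x :=
  Quotient.exact (Quotient.out_eq (@Quotient.mk _ (orbSetoid H) x))

/-- An element moving the orbit representative to `x`. -/
def dd (x : Xne G) : H := (rep_spec H x).choose

lemma dd_spec (x : Xne G) : cG ((dd H x : H) : G) (rep H x) = x :=
  (rep_spec H x).choose_spec

/-- The stabilizer group. -/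
def Kgrp (ρ : Xne G) : Subgroup G := H ⊓ Subgroup.centralizer {(ρ : G)}

lemma mem_Kgrp_iff {ρ : Xne G} (g : G) :
    g ∈ Kgrp H ρ ↔ g ∈ H ∧ cG g ρ = ρ := by
  rw [Kgrp, Subgroup.mem_inf, Subgroup.mem_centralizer_iff, cG_fix_iff]
  simp

/-- Multiplication of an element of `H` with an element of the stabilizer, in `H`. -/
def mulK {ρ : Xne G} (h : H) (k : Kgrp H ρ) : H :=
  ⟨(h : G) * (k : G), mul_mem h.2 ((Subgroup.mem_inf.mp k.2).1)⟩

variable (μ : ∀ ρ : Xne G, Set ↥(Kgrp H ρ) → ℝ)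

/-- The function whose integral is the measure of `A ⊆ H`. -/
def fA (A : Set ↥H) (x : Xne G) : ℝ :=
  μ (rep H x) {k | mulK H (dd H x) k ∈ A}

lemma fA_inv (μinv : ∀ (ρ : Xne G) (k₀ : ↥(Kgrp H ρ)) (S : Set ↥(Kgrp H ρ)),
      μ ρ ((fun k => k₀ * k) '' S) = μ ρ S)
    (h : H) (A : Set ↥H) (x : Xne G) :
    fA H μ ((fun a => h * a) '' A) x = fA H μ A (cG ((h : G))⁻¹ x) := by
  set y := cG ((h : G))⁻¹ x with hy
  have hyx : cG (h : G) y = x := by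
    rw [hy, cG_cG, mul_inv_cancel, cG_one]
  have hrep : rep H y = rep H x := by
    rw [← hyx, show ((h : G)) = ((h : H) : G) from rfl, rep_cG]
  set ρ := rep H x with hρ
  -- k₀ = (dd x)⁻¹ h (dd y) stabilizes ρ
  have hk₀mem : ((dd H x : H) : G)⁻¹ * (h : G) * ((dd H y : H) : G) ∈ Kgrp H ρ := by
    rw [mem_Kgrp_iff]
    constructor
    · exact mul_mem (mul_mem (inv_mem (dd H x).2) h.2) (dd H y).2
    · have h1 : cG ((dd H y : H) : G) ρ = y := by rw [← hrep]; exact dd_spec H y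
      have h2 : cG ((dd H x : H) : G) ρ = x := dd_spec H x
      have h3 : cG (((dd H x : H) : G))⁻¹ x = ρ := by
        have h4 := congrArg (cG (((dd H x : H) : G))⁻¹) h2
        rw [cG_cG, inv_mul_cancel, cG_one] at h4
        exact h4.symm
      calc cG (((dd H x : H) : G)⁻¹ * (h : G) * ((dd H y : H) : G)) ρ
          = cG (((dd H x : H) : G))⁻¹ (cG (h : G) (cG ((dd H y : H) : G) ρ)) := by
            simp only [cG_cG, mul_assoc]
      _ = cG (((dd H x : H) : G))⁻¹ (cG (h : G) y) := by rw [h1]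
      _ = cG (((dd H x : H) : G))⁻¹ x := by rw [hyx]
      _ = ρ := h3
  set k₀ : ↥(Kgrp H ρ) := ⟨_, hk₀mem⟩ with hk₀
  show μ ρ {k | mulK H (dd H x) k ∈ (fun a => h * a) '' A}
      = μ (rep H y) {k | mulK H (dd H y) k ∈ A}
  rw [hrep, ← μinv ρ k₀ {k | mulK H (dd H y) k ∈ A}]
  congr 1
  ext k
  simp only [Set.mem_setOf_eq, Set.mem_image]
  constructor
  · rintro ⟨a, haA, hak⟩
    refine ⟨k₀⁻¹ * k, ?_, by show k₀ * (k₀⁻¹ * k) = k; group⟩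
    have hcoe : (h : G) * (a : G) = ((dd H x : H) : G) * (k : G) :=
      congrArg Subtype.val hak
    have ha : (a : G) = (h : G)⁻¹ * (((dd H x : H) : G) * (k : G)) := by
      rw [← hcoe]; group
    have heq : mulK H (dd H y) (k₀⁻¹ * k) = a := by
      apply Subtype.ext
      show ((dd H y : H) : G) * ((k₀⁻¹ * k : ↥(Kgrp H ρ)) : G) = (a : G)
      rw [ha]
      show ((dd H y : H) : G) * ((k₀ : G)⁻¹ * (k : G)) = _
      rw [show (k₀ : G) = ((dd H x : H) : G)⁻¹ * (h : G) * ((dd H y : H) : G) from rfl]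
      group
    show mulK H (dd H y) (k₀⁻¹ * k) ∈ A
    rw [heq]; exact haA
  · rintro ⟨k', hk', rfl⟩
    refine ⟨mulK H (dd H y) k', hk', ?_⟩
    apply Subtype.ext
    show (h : G) * (((dd H y : H) : G) * (k' : G)) = ((dd H x : H) : G) * ((k₀ * k' : ↥(Kgrp H ρ)) : G)
    show (h : G) * (((dd H y : H) : G) * (k' : G)) = ((dd H x : H) : G) * ((k₀ : G) * (k' : G))
    rw [show (k₀ : G) = ((dd H x : H) : G)⁻¹ * (h : G) * ((dd H y : H) : G) from rfl]
    group


variable (hμ0 : ∀ ρ (S : Set ↥(Kgrp H ρ)), 0 ≤ μ ρ S)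
  (hμ1 : ∀ ρ, μ ρ Set.univ = 1)
  (hμadd : ∀ ρ (S T : Set ↥(Kgrp H ρ)), Disjoint S T → μ ρ (S ∪ T) = μ ρ S + μ ρ T)

include hμ0 in
lemma fA_nonneg (A : Set ↥H) (x : Xne G) : 0 ≤ fA H μ A x := hμ0 _ _

include hμ0 hμ1 hμadd in
lemma fA_le_one (A : Set ↥H) (x : Xne G) : fA H μ A x ≤ 1 := by
  calc fA H μ A x ≤ μ (rep H x) Set.univ :=
        m_mono (μ (rep H x)) (hμ0 _) (hμadd _) (Set.subset_univ _)
  _ = 1 := hμ1 _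

include hμ1 in
lemma fA_univ (x : Xne G) : fA H μ Set.univ x = 1 := by
  unfold fA
  rw [show {k : ↥(Kgrp H (rep H x)) | mulK H (dd H x) k ∈ (Set.univ : Set ↥H)}
      = Set.univ from by ext k; simp]
  exact hμ1 _

include hμadd in
lemma fA_union {A B : Set ↥H} (hAB : Disjoint A B) (x : Xne G) :
    fA H μ (A ∪ B) x = fA H μ A x + fA H μ B x := by
  unfold fA
  rw [show {k : ↥(Kgrp H (rep H x)) | mulK H (dd H x) k ∈ A ∪ B}
      = {k | mulK H (dd H x) k ∈ A} ∪ {k | mulK H (dd H x) k ∈ B} from by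
        ext k; simp [Set.mem_union]]
  apply hμadd
  rw [Set.disjoint_iff]
  rintro k ⟨hkA, hkB⟩
  exact absurd (Set.mem_inter hkA hkB) (by rw [Set.disjoint_iff] at hAB; exact fun h => hAB h)

end IAaux

/-- If a discrete group `G` has a non-amenable subgroup `H` such that for every
`h ∈ G \ {e}` the group `{g ∈ H : g h g⁻¹ = h}` is amenable, then `G` is not inner
amenable. -/
theorem not_innerAmenable_of_subgroup {G : Type*} [Group G] (H : Subgroup G)
    (hH : ¬ AmenableGroup ↥H)
    (hcent : ∀ h : G, h ≠ 1 → AmenableGroup ↥(H ⊓ Subgroup.centralizer {h})) :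
    ¬ InnerAmenable G := by
  rintro ⟨m, hm0, hm1, hmadd, hminv⟩
  apply hH
  have hch : ∀ ρ : IAaux.Xne G, ∃ μρ : Set ↥(IAaux.Kgrp H ρ) → ℝ,
      (∀ A, 0 ≤ μρ A) ∧ μρ Set.univ = 1 ∧
      (∀ A B, Disjoint A B → μρ (A ∪ B) = μρ A + μρ B) ∧
      ∀ (k₀ : ↥(IAaux.Kgrp H ρ)) (S : Set ↥(IAaux.Kgrp H ρ)),
        μρ ((fun k => k₀ * k) '' S) = μρ S :=
    fun ρ => hcent (↑ρ) ρ.2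
  choose μ hμ0 hμ1 hμadd hμinv using hch
  refine ⟨fun A => IAaux.Im m (IAaux.fA H μ A), ?_, ?_, ?_, ?_⟩
  · intro A
    exact IAaux.Im_nonneg m hm0 hmadd hm1
      (IAaux.fA_nonneg H μ hμ0 A) (IAaux.fA_le_one H μ hμ0 hμ1 hμadd A)
  · show IAaux.Im m (IAaux.fA H μ Set.univ) = 1
    rw [show IAaux.fA H μ Set.univ = fun _ => (1:ℝ) from
      funext (IAaux.fA_univ H μ hμ1)]
    exact IAaux.Im_one m hm0 hmadd hm1
  · intro A B hAB
    show IAaux.Im m (IAaux.fA H μ (A ∪ B))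
        = IAaux.Im m (IAaux.fA H μ A) + IAaux.Im m (IAaux.fA H μ B)
    rw [show IAaux.fA H μ (A ∪ B) = fun x => IAaux.fA H μ A x + IAaux.fA H μ B x from
      funext (IAaux.fA_union H μ hμadd hAB)]
    exact IAaux.Im_add m hm0 hmadd hm1
      (IAaux.fA_nonneg H μ hμ0 A) (IAaux.fA_nonneg H μ hμ0 B)
      (fun x => by
        rw [← IAaux.fA_union H μ hμadd hAB x]
        exact IAaux.fA_le_one H μ hμ0 hμ1 hμadd _ x)
  · intro h A
    show IAaux.Im m (IAaux.fA H μ ((fun a => h * a) '' A)) = IAaux.Im m (IAaux.fA H μ A)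
    rw [show IAaux.fA H μ ((fun a => h * a) '' A)
        = fun x => IAaux.fA H μ A ((IAaux.cEquiv ((h : G))).symm x) from
      funext (IAaux.fA_inv H μ hμinv h A)]
    exact IAaux.Im_invariant m hm0 hmadd hm1
      (IAaux.fA_le_one H μ hμ0 hμ1 hμadd A) (IAaux.cEquiv (↑h))
      (fun S => hminv (↑h) S)
end
end

section
/- Suppose ψ : ℚ ∪ {±∞} → ℝ is strictly increasing and satisfies ψ(−∞) = −1/2, ψ(0) = 0, ψ(∞) = 1/2, and ψ(p/q ⊕ r/s) = (ψ(p/q) + ψ(r/s))/2 whenever p/q and r/s are consecutive Farey numbers. Then ψ(−x) = −ψ(x) for every x ∈ ℚ ∪ {±∞}, and ψ(1/x) = 1/2 − ψ(x) for every x ∈ ℚ ∪ {∞} with x ≥ 0 (with the conventions 1/0 = ∞ and 1/∞ = 0). -/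
noncomputable section

/-- The inclusion of `ℚ` into `ℚ ∪ {±∞}`. -/
def rc (q : ℚ) : WithBot (WithTop ℚ) := ((q : WithTop ℚ) : WithBot (WithTop ℚ))

lemma coprime_of_unimodular {a b c d : ℤ} (h : |a * d - c * b| = 1) :
    Nat.Coprime a.natAbs b.natAbs := by
  have : IsCoprime a b := by
    rcases abs_eq (by norm_num : (0:ℤ) ≤ 1) |>.mp h with h1 | h1
    · exact ⟨d, -c, by linarith⟩
    · exact ⟨-d, c, by linarith⟩
  exact Int.isCoprime_iff_gcd_eq_one.mp this

lemma exists_parents (x : ℚ) (hx : 0 < x) (hden : 2 ≤ (x.den : ℤ)) :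
    ∃ a b c d : ℤ, 0 ≤ a ∧ 0 < b ∧ 0 ≤ c ∧ 0 < d ∧
      a + c = x.num ∧ b + d = (x.den : ℤ) ∧ a * d - c * b = 1 := by
  set p := x.num with hp'
  set q := (x.den : ℤ) with hq'
  have hp : 1 ≤ p := Rat.num_pos.mpr hx
  have hq : 2 ≤ q := hden
  have hcop : IsCoprime p q := by
    rw [Int.isCoprime_iff_gcd_eq_one]
    exact x.reduced
  obtain ⟨u, v, huv⟩ := hcop
  set d := u % q with hd'
  have hd0 : 0 ≤ d := Int.emod_nonneg u (by omega)
  have hdq : d < q := Int.emod_lt_of_pos u (by omega)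
  have hdvd : q ∣ p * d - 1 := by
    have h1 : q ∣ u - d := Int.dvd_self_sub_of_emod_eq rfl
    obtain ⟨k, hk⟩ := h1
    refine ⟨-(p * k + v), ?_⟩
    have hu : u = d + q * k := by omega
    calc p * d - 1 = p * d - (u * p + v * q) := by rw [huv]
    _ = q * (-(p * k + v)) := by rw [hu]; ring
  obtain ⟨c, hc⟩ := hdvd
  have hdpos : 0 < d := by
    rcases eq_or_lt_of_le hd0 with h | h
    · exfalso
      have h2 : q * c = -1 := by rw [← hc, ← h]; ring
      rcases lt_trichotomy c 0 with h3 | h3 | h3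
      · nlinarith
      · simp [h3] at h2
      · nlinarith
    · exact h
  have hc0 : 0 ≤ c := by nlinarith
  have hcp : c < p := by nlinarith
  exact ⟨p - c, q - d, c, d, by omega, by omega, hc0, hdpos, by ring, by ring,
    by linear_combination hc⟩

/-- Functions satisfying the Farey averaging recursion on the nonnegative part of the
Stern–Brocot tree, with the same values at `0` and `∞`, agree on nonnegative rationals. -/
lemma uniq_nonneg (ψ φ : WithBot (WithTop ℚ) → ℝ)
    (h0 : ψ (rc 0) = φ (rc 0)) (ht : ψ ⊤ = φ ⊤)
    (hfψ : ∀ p q r s : ℤ, 0 ≤ p → 0 ≤ r → 0 < q → 0 < s → |p * s - r * q| = 1 →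
      ψ (rc (((p + r : ℤ) : ℚ) / ((q + s : ℤ) : ℚ))) =
        (ψ (rc ((p : ℚ) / (q : ℚ))) + ψ (rc ((r : ℚ) / (s : ℚ)))) / 2)
    (hfφ : ∀ p q r s : ℤ, 0 ≤ p → 0 ≤ r → 0 < q → 0 < s → |p * s - r * q| = 1 →
      φ (rc (((p + r : ℤ) : ℚ) / ((q + s : ℤ) : ℚ))) =
        (φ (rc ((p : ℚ) / (q : ℚ))) + φ (rc ((r : ℚ) / (s : ℚ)))) / 2)
    (htψ : ∀ n : ℤ, 0 ≤ n → ψ (rc ((n : ℚ) + 1)) = (ψ (rc (n : ℚ)) + ψ ⊤) / 2)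
    (htφ : ∀ n : ℤ, 0 ≤ n → φ (rc ((n : ℚ) + 1)) = (φ (rc (n : ℚ)) + φ ⊤) / 2) :
    ∀ x : ℚ, 0 ≤ x → ψ (rc x) = φ (rc x) := by
  suffices H : ∀ n : ℕ, ∀ x : ℚ, 0 ≤ x → x.num + (x.den : ℤ) ≤ (n : ℤ) →
      ψ (rc x) = φ (rc x) by
    intro x hx
    exact H (x.num.toNat + x.den) x hx (by push_cast; omega)
  intro n
  induction n using Nat.strong_induction_on with
  | _ n ih =>
    intro x hx hm
    have hnum : 0 ≤ x.num := Rat.num_nonneg.mpr hx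
    have hden1 : 1 ≤ (x.den : ℤ) := by exact_mod_cast x.pos
    rcases eq_or_lt_of_le hden1 with hden | hden
    · -- x is an integer
      have hxk : x = (x.num : ℚ) := ((Rat.den_eq_one_iff x).mp (by exact_mod_cast hden.symm)).symm
      rcases eq_or_lt_of_le hnum with h0' | h0'
      · have hx0 : x = 0 := by rw [hxk, ← h0']; norm_num
        rw [hx0]; exact h0
      · set k : ℤ := x.num with hk'
        have h1 : x = ((k - 1 : ℤ) : ℚ) + 1 := by
          conv_lhs => rw [hxk]
          push_cast; ring
        have hyn : ((k - 1 : ℤ) : ℚ).num = k - 1 := Rat.num_intCast _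
        have hyd : (((k - 1 : ℤ) : ℚ).den : ℤ) = 1 := by
          rw [Rat.den_intCast]; norm_num
        have hrec := ih (n - 1) (by omega) ((k - 1 : ℤ) : ℚ)
          (by exact_mod_cast (by omega : (0:ℤ) ≤ k - 1)) (by rw [hyn, hyd]; push_cast; omega)
        rw [h1, htψ _ (by omega), htφ _ (by omega), hrec, ht]
    · -- x is not an integer
      obtain ⟨a, b, c, d, ha, hb, hc, hd, hac, hbd, hdet⟩ :=
        exists_parents x (lt_of_le_of_ne hx (by
          rintro rfl; simp at hden)) (by omega)
      have habs : |a * d - c * b| = 1 := by rw [hdet]; norm_num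
      have hxeq : x = ((a + c : ℤ) : ℚ) / ((b + d : ℤ) : ℚ) := by
        conv_lhs => rw [← Rat.num_div_den x]
        rw [hac, hbd]; push_cast; ring
      have hcop1 := coprime_of_unimodular habs
      have hcop2 : Nat.Coprime c.natAbs d.natAbs := by
        apply coprime_of_unimodular (a := c) (b := d) (c := a) (d := b)
        rw [show c * b - a * d = -(a * d - c * b) by ring, abs_neg, hdet]; norm_num
      have hy1n : ((a : ℚ) / (b : ℚ)).num = a := Rat.num_div_eq_of_coprime hb hcop1
      have hy1d : (((a : ℚ) / (b : ℚ)).den : ℤ) = b := Rat.den_div_eq_of_coprime hb hcop1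
      have hy2n : ((c : ℚ) / (d : ℚ)).num = c := Rat.num_div_eq_of_coprime hd hcop2
      have hy2d : (((c : ℚ) / (d : ℚ)).den : ℤ) = d := Rat.den_div_eq_of_coprime hd hcop2
      have hb' : (0:ℚ) < (b:ℚ) := by exact_mod_cast hb
      have hd' : (0:ℚ) < (d:ℚ) := by exact_mod_cast hd
      have hrec1 := ih (n - 1) (by omega) ((a : ℚ) / (b : ℚ))
        (div_nonneg (by exact_mod_cast ha) hb'.le)
        (by rw [hy1n, hy1d]; push_cast; omega)
      have hrec2 := ih (n - 1) (by omega) ((c : ℚ) / (d : ℚ))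
        (div_nonneg (by exact_mod_cast hc) hd'.le)
        (by rw [hy2n, hy2d]; push_cast; omega)
      rw [hxeq, hfψ a b c d ha hc hb hd habs, hfφ a b c d ha hc hb hd habs, hrec1, hrec2]

/-- If `ψ : ℚ ∪ {±∞} → ℝ` is strictly increasing and satisfies `ψ(-∞) = -1/2`,
`ψ(0) = 0`, `ψ(∞) = 1/2` and `ψ(p/q ⊕ r/s) = (ψ(p/q) + ψ(r/s))/2` for consecutive
Farey numbers `p/q` and `r/s` (including the pairs involving `±∞ = ∓1/0`), then
`ψ(-x) = -ψ(x)` for all `x ∈ ℚ ∪ {±∞}` and `ψ(1/x) = 1/2 - ψ(x)` for all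
`x ∈ ℚ ∪ {∞}` with `x ≥ 0` (with `1/0 = ∞` and `1/∞ = 0`). -/
theorem psi_symmetries (ψ : WithBot (WithTop ℚ) → ℝ)
    (hmono : StrictMono ψ)
    (hbot : ψ ⊥ = -(1/2)) (hzero : ψ (rc 0) = 0) (htop : ψ ⊤ = 1/2)
    (hfarey : ∀ p q r s : ℤ, 0 < q → 0 < s → |p * s - r * q| = 1 →
      ψ (rc (((p + r : ℤ) : ℚ) / ((q + s : ℤ) : ℚ))) =
        (ψ (rc ((p : ℚ) / (q : ℚ))) + ψ (rc ((r : ℚ) / (s : ℚ)))) / 2)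
    (hbotfarey : ∀ n : ℤ, ψ (rc ((n : ℚ) - 1)) = (ψ ⊥ + ψ (rc (n : ℚ))) / 2)
    (htopfarey : ∀ n : ℤ, ψ (rc ((n : ℚ) + 1)) = (ψ (rc (n : ℚ)) + ψ ⊤) / 2) :
    (∀ x : ℚ, ψ (rc (-x)) = - ψ (rc x)) ∧ (ψ ⊤ = - ψ ⊥) ∧ (ψ ⊥ = - ψ ⊤) ∧
    (∀ x : ℚ, 0 < x → ψ (rc x⁻¹) = 1/2 - ψ (rc x)) ∧
    (ψ ⊤ = 1/2 - ψ (rc 0)) ∧ (ψ (rc 0) = 1/2 - ψ ⊤) := by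
  -- the negation symmetry
  set φN : WithBot (WithTop ℚ) → ℝ := fun y =>
    WithBot.recBotCoe (-ψ ⊤) (fun t => WithTop.recTopCoe (-ψ ⊥) (fun q => -ψ (rc (-q))) t) y
    with hφN
  have hφNrc : ∀ q : ℚ, φN (rc q) = -ψ (rc (-q)) := fun q => rfl
  have hφNtop : φN ⊤ = -ψ ⊥ := rfl
  have hneg : ∀ x : ℚ, 0 ≤ x → ψ (rc x) = -ψ (rc (-x)) := by
    intro x hx
    rw [← hφNrc]
    refine uniq_nonneg ψ φN ?_ ?_ ?_ ?_ ?_ ?_ x hx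
    · rw [hφNrc, neg_zero, hzero]; norm_num
    · rw [hφNtop, hbot, htop]; norm_num
    · intro p q r s _ _ hq hs h; exact hfarey p q r s hq hs h
    · intro p q r s _ _ hq hs h
      rw [hφNrc, hφNrc, hφNrc]
      have e1 : -(((p + r : ℤ) : ℚ) / ((q + s : ℤ) : ℚ)) =
          ((((-p) + (-r) : ℤ) : ℚ) / ((q + s : ℤ) : ℚ)) := by push_cast; ring
      have e2 : -((p : ℚ) / (q : ℚ)) = (((-p : ℤ) : ℚ) / ((q : ℤ) : ℚ)) := by push_cast; ring
      have e3 : -((r : ℚ) / (s : ℚ)) = (((-r : ℤ) : ℚ) / ((s : ℤ) : ℚ)) := by push_cast; ring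
      rw [e1, e2, e3, hfarey (-p) q (-r) s hq hs (by
        rw [show -p * s - -r * q = -(p * s - r * q) by ring, abs_neg]; exact h)]
      push_cast
      ring
    · intro n _; exact htopfarey n
    · intro n _
      rw [hφNrc, hφNrc, hφNtop]
      have e1 : -((n : ℚ) + 1) = (((-n : ℤ) : ℚ) - 1) := by push_cast; ring
      have e2 : -(n : ℚ) = ((-n : ℤ) : ℚ) := by push_cast; ring
      rw [e1, e2, hbotfarey (-n)]
      ring
  -- the inversion symmetry
  set φI : WithBot (WithTop ℚ) → ℝ := fun y =>
    WithBot.recBotCoe 0 (fun t => WithTop.recTopCoe (1/2 - ψ (rc 0))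
      (fun q => if q = 0 then 1/2 - ψ ⊤ else 1/2 - ψ (rc q⁻¹)) t) y with hφI
  have hφIrc : ∀ q : ℚ, φI (rc q) = if q = 0 then 1/2 - ψ ⊤ else 1/2 - ψ (rc q⁻¹) :=
    fun q => rfl
  have hφItop : φI ⊤ = 1/2 - ψ (rc 0) := rfl
  have hinv : ∀ x : ℚ, 0 ≤ x → ψ (rc x) = φI (rc x) := by
    refine uniq_nonneg ψ φI ?_ ?_ ?_ ?_ ?_ ?_
    · rw [hφIrc]; simp [hzero, htop]
    · rw [hφItop, hzero, htop]; norm_num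
    · intro p q r s _ _ hq hs h; exact hfarey p q r s hq hs h
    · intro p q r s hp hr hq hs h
      rcases eq_or_lt_of_le hp with hp0 | hp0
      · -- p = 0, so r = 1 and q = 1
        have hrq : r * q = 1 := by
          rw [← hp0] at h
          rw [show (0:ℤ) * s - r * q = -(r * q) by ring, abs_neg,
            abs_eq (by norm_num : (0:ℤ) ≤ 1)] at h
          rcases h with h | h
          · exact h
          · nlinarith
        have hr1 : r = 1 := by nlinarith
        have hq1 : q = 1 := by nlinarith
        subst hr1; subst hq1
        rw [← hp0]
        have em : (((0 + 1 : ℤ) : ℚ) / ((1 + s : ℤ) : ℚ)) ≠ 0 := by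
          rw [div_ne_zero_iff]
          refine ⟨by norm_num, ?_⟩
          exact_mod_cast (by omega : (1 + s : ℤ) ≠ 0)
        have e0 : ((0 : ℤ) : ℚ) / ((1 : ℤ) : ℚ) = 0 := by norm_num
        have es : ((1 : ℤ) : ℚ) / ((s : ℤ) : ℚ) ≠ 0 := by
          rw [div_ne_zero_iff]
          exact ⟨by norm_num, by exact_mod_cast (by omega : (s : ℤ) ≠ 0)⟩
        rw [hφIrc, hφIrc, hφIrc, if_neg em, e0, if_pos rfl, if_neg es]
        have einv : ((((0 + 1 : ℤ) : ℚ) / ((1 + s : ℤ) : ℚ))⁻¹) = ((s : ℚ) + 1) := by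
          rw [inv_div]; push_cast; ring
        have einv2 : ((((1 : ℤ) : ℚ) / ((s : ℤ) : ℚ))⁻¹) = (s : ℚ) := by
          push_cast; rw [one_div, inv_inv]
        rw [einv, einv2, htopfarey s]
        linarith
      · rcases eq_or_lt_of_le hr with hr0 | hr0
        · -- r = 0, so p = 1 and s = 1
          have hps : p * s = 1 := by
            rw [← hr0] at h
            rw [show p * s - 0 * q = p * s by ring, abs_eq (by norm_num : (0:ℤ) ≤ 1)] at h
            rcases h with h | h
            · exact h
            · nlinarith
          have hp1 : p = 1 := by nlinarith
          have hs1 : s = 1 := by nlinarith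
          subst hp1; subst hs1
          rw [← hr0]
          have em : (((1 + 0 : ℤ) : ℚ) / ((q + 1 : ℤ) : ℚ)) ≠ 0 := by
            rw [div_ne_zero_iff]
            refine ⟨by norm_num, ?_⟩
            exact_mod_cast (by omega : (q + 1 : ℤ) ≠ 0)
          have e0 : ((0 : ℤ) : ℚ) / ((1 : ℤ) : ℚ) = 0 := by norm_num
          have eq' : ((1 : ℤ) : ℚ) / ((q : ℤ) : ℚ) ≠ 0 := by
            rw [div_ne_zero_iff]
            exact ⟨by norm_num, by exact_mod_cast (by omega : (q : ℤ) ≠ 0)⟩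
          rw [hφIrc, hφIrc, hφIrc, if_neg em, e0, if_pos rfl, if_neg eq']
          have einv : ((((1 + 0 : ℤ) : ℚ) / ((q + 1 : ℤ) : ℚ))⁻¹) = ((q : ℚ) + 1) := by
            rw [inv_div]; push_cast; ring
          have einv2 : ((((1 : ℤ) : ℚ) / ((q : ℤ) : ℚ))⁻¹) = (q : ℚ) := by
            push_cast; rw [one_div, inv_inv]
          rw [einv, einv2, htopfarey q]
          linarith
        · -- p > 0 and r > 0
          have em : (((p + r : ℤ) : ℚ) / ((q + s : ℤ) : ℚ)) ≠ 0 := by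
            rw [div_ne_zero_iff]
            constructor
            · exact_mod_cast (by omega : (p + r : ℤ) ≠ 0)
            · exact_mod_cast (by omega : (q + s : ℤ) ≠ 0)
          have ep : ((p : ℤ) : ℚ) / ((q : ℤ) : ℚ) ≠ 0 := by
            rw [div_ne_zero_iff]
            exact ⟨by exact_mod_cast (by omega : (p:ℤ) ≠ 0),
              by exact_mod_cast (by omega : (q:ℤ) ≠ 0)⟩
          have er : ((r : ℤ) : ℚ) / ((s : ℤ) : ℚ) ≠ 0 := by
            rw [div_ne_zero_iff]
            exact ⟨by exact_mod_cast (by omega : (r:ℤ) ≠ 0),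
              by exact_mod_cast (by omega : (s:ℤ) ≠ 0)⟩
          rw [hφIrc, hφIrc, hφIrc, if_neg em, if_neg ep, if_neg er]
          have einv : ((((p + r : ℤ) : ℚ) / ((q + s : ℤ) : ℚ))⁻¹) =
              (((q + s : ℤ) : ℚ) / ((p + r : ℤ) : ℚ)) := inv_div _ _
          have einv2 : (((p : ℚ) / (q : ℚ))⁻¹) = ((q : ℚ) / (p : ℚ)) := inv_div _ _
          have einv3 : (((r : ℚ) / (s : ℚ))⁻¹) = ((s : ℚ) / (r : ℚ)) := inv_div _ _
          have hfl := hfarey q p s r hp0 hr0 (by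
            rw [show q * r - s * p = -(p * s - r * q) by ring, abs_neg]; exact h)
          rw [einv, einv2, einv3]
          rw [show ((q + s : ℤ) : ℚ) = ((q + s : ℤ) : ℚ) from rfl] at hfl
          linarith [hfl]
    · intro n _; exact htopfarey n
    · intro n hn
      have hne : (n : ℚ) + 1 ≠ 0 := by
        have : (0:ℚ) ≤ (n:ℚ) := by exact_mod_cast hn
        positivity
      rcases eq_or_lt_of_le hn with hn0 | hn0
      · rw [hφIrc, hφIrc, hφItop, if_neg hne]
        rw [show (n : ℚ) = 0 by exact_mod_cast hn0.symm, if_pos rfl]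
        have h1 := htopfarey 0
        rw [show ((0:ℤ):ℚ) + 1 = 1 by norm_num, show ((0:ℤ):ℚ) = 0 by norm_num] at h1
        rw [show ((0:ℚ) + 1)⁻¹ = 1 by norm_num]
        linarith
      · rw [hφIrc, hφIrc, hφItop, if_neg hne,
          if_neg (by exact_mod_cast (by omega : (n:ℤ) ≠ 0) : (n:ℚ) ≠ 0)]
        have h1 := hfarey 0 1 1 n one_pos hn0 (by norm_num)
        have e1 : (((0 + 1 : ℤ) : ℚ) / ((1 + n : ℤ) : ℚ)) = ((n : ℚ) + 1)⁻¹ := by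
          rw [inv_eq_one_div]; push_cast; ring
        have e2 : ((0 : ℤ) : ℚ) / ((1 : ℤ) : ℚ) = 0 := by norm_num
        have e3 : ((1 : ℤ) : ℚ) / ((n : ℤ) : ℚ) = ((n : ℚ))⁻¹ := by
          push_cast; rw [one_div]
        rw [e1, e2, e3] at h1
        linarith
  refine ⟨?_, by simp [htop, hbot], by simp [hbot, htop], ?_,
    by rw [htop, hzero]; norm_num, by rw [hzero, htop]; norm_num⟩
  · intro x
    rcases le_or_gt 0 x with hx | hx
    · have := hneg x hx
      linarith
    · have := hneg (-x) (by linarith)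
      rw [neg_neg] at this
      linarith
  · intro x hx
    have := hinv x hx.le
    rw [hφIrc, if_neg hx.ne'] at this
    linarith
end
end

section
/- If two elements of PSL(2,ℤ), acting on ℝ ∪ {∞} by Möbius transformations, take the same values at two distinct points of ℚ ∪ {∞}, then they are equal. Equivalently, an element of PSL(2,ℤ) is uniquely determined by its values on two distinct points of ℚ ∪ {∞}. -/
noncomputable section

/-- The Möbius action of `SL(2,ℤ)` on `ℝ ∪ {∞}`, `x ↦ (a x + b) / (c x + d)`.
Since `±g` act in the same way, this describes the action of `PSL(2,ℤ)`. -/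
noncomputable def moebius (g : Matrix.SpecialLinearGroup (Fin 2) ℤ) :
    OnePoint ℝ → OnePoint ℝ :=
  fun x =>
    Option.casesOn x
      (if (g 1 0 : ℤ) = 0 then OnePoint.infty
       else ((((g 0 0 : ℤ) : ℝ) / ((g 1 0 : ℤ) : ℝ) : ℝ) : OnePoint ℝ))
      (fun r : ℝ =>
        if ((g 1 0 : ℤ) : ℝ) * r + ((g 1 1 : ℤ) : ℝ) = 0 then OnePoint.infty
        else (((((g 0 0 : ℤ) : ℝ) * r + ((g 0 1 : ℤ) : ℝ)) /
              (((g 1 0 : ℤ) : ℝ) * r + ((g 1 1 : ℤ) : ℝ)) : ℝ) : OnePoint ℝ))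

/-- The subset `ℚ ∪ {∞}` of `ℝ ∪ {∞}`. -/
def RatOrInf : Set (OnePoint ℝ) :=
  {x | x = OnePoint.infty ∨ ∃ q : ℚ, x = ((q : ℝ) : OnePoint ℝ)}

instance : Fact (Even (Fintype.card (Fin 2))) := ⟨⟨1, rfl⟩⟩

open Matrix

abbrev SL2 := Matrix.SpecialLinearGroup (Fin 2) ℤ

def mq (g : SL2) : Matrix (Fin 2) (Fin 2) ℚ := (g : Matrix (Fin 2) (Fin 2) ℤ).map (Int.castRingHom ℚ)

lemma mq_mul (a b : SL2) : mq (a * b) = mq a * mq b := by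
  show ((a.1 * b.1).map (Int.castRingHom ℚ)) = _
  rw [Matrix.map_mul]; rfl

lemma mq_one : mq 1 = 1 := by
  show ((1 : Matrix (Fin 2) (Fin 2) ℤ).map (Int.castRingHom ℚ)) = 1
  simp

lemma mq_mulVec (g : SL2) (v : Fin 2 → ℚ) (i : Fin 2) :
    (mq g *ᵥ v) i = ((g.1 i 0 : ℤ) : ℚ) * v 0 + ((g.1 i 1 : ℤ) : ℚ) * v 1 := by
  simp [mq, Matrix.mulVec, dotProduct, Fin.sum_univ_two]

lemma mq_det (g : SL2) : ((g.1 0 0 : ℤ):ℚ) * ((g.1 1 1 : ℤ):ℚ) - ((g.1 0 1 : ℤ):ℚ) * ((g.1 1 0 : ℤ):ℚ) = 1 := by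
  have h := g.2
  rw [Matrix.det_fin_two] at h
  exact_mod_cast congrArg (fun z : ℤ => (z : ℚ)) h

lemma rat_root (T : ℤ) (s : ℚ) (h : s^2 - (T:ℚ) * s + 1 = 0) : s = 1 ∨ s = -1 := by
  have hden : (s.den : ℚ) ≠ 0 := by exact_mod_cast s.den_nz
  have hs : s = (s.num : ℚ) / (s.den : ℚ) := by exact_mod_cast (Rat.num_div_den s).symm
  have h2 : (s.num:ℚ)^2 - (T:ℚ) * s.num * s.den + (s.den:ℚ)^2 = 0 := by
    have h4 : ((s.num:ℚ)^2 - (T:ℚ)*s.num*s.den + (s.den:ℚ)^2) * s.den = 0 := by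
      rw [hs] at h
      field_simp at h
      linear_combination (s.den:ℚ) * h
    rcases mul_eq_zero.mp h4 with h5 | h5
    · exact h5
    · exact absurd h5 hden
  have h3 : s.num^2 - T * s.num * s.den + (s.den:ℤ)^2 = 0 := by exact_mod_cast h2
  have hdvd : (s.den:ℤ) ∣ s.num^2 := ⟨T * s.num - s.den, by linarith [h3]⟩
  have hcop : Nat.Coprime s.num.natAbs s.den := s.reduced
  have hc2 : IsCoprime (s.num:ℤ) (s.den:ℤ) := Int.isCoprime_iff_gcd_eq_one.mpr hcop
  have hc3 : IsCoprime ((s.den):ℤ) (s.num^2) := (hc2.symm).pow_right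
  have hden1 : (s.den : ℤ) = 1 := by
    have hu : IsUnit ((s.den):ℤ) := hc3.isUnit_of_dvd hdvd
    rcases Int.isUnit_iff.mp hu with h | h
    · exact h
    · exfalso; omega
  have hdq : (s.den:ℚ) = 1 := by exact_mod_cast hden1
  have hsnum : s = (s.num : ℚ) := by nth_rewrite 1 [hs]; rw [hdq, div_one]
  have hnum : s.num * (T - s.num) = 1 := by nlinarith [h3, hden1]
  have hu : IsUnit s.num := IsUnit.of_mul_eq_one _ hnum
  rcases Int.isUnit_iff.mp hu with h | h
  · left; rw [hsnum, h]; norm_num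
  · right; rw [hsnum, h]; norm_num

lemma eig_key (k : SL2) (v w : Fin 2 → ℚ) (s t : ℚ)
    (hvw : v 0 * w 1 - v 1 * w 0 ≠ 0)
    (hv : mq k *ᵥ v = s • v) (hw : mq k *ᵥ w = t • w) :
    k = 1 ∨ k = -1 := by
  set A := ((k.1 0 0 : ℤ) : ℚ) with hA
  set B := ((k.1 0 1 : ℤ) : ℚ) with hB
  set C := ((k.1 1 0 : ℤ) : ℚ) with hC
  set D := ((k.1 1 1 : ℤ) : ℚ) with hD
  have e1 : A * v 0 + B * v 1 = s * v 0 := by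
    have := congrFun hv 0; rw [mq_mulVec] at this; simpa using this
  have e2 : C * v 0 + D * v 1 = s * v 1 := by
    have := congrFun hv 1; rw [mq_mulVec] at this; simpa using this
  have e3 : A * w 0 + B * w 1 = t * w 0 := by
    have := congrFun hw 0; rw [mq_mulVec] at this; simpa using this
  have e4 : C * w 0 + D * w 1 = t * w 1 := by
    have := congrFun hw 1; rw [mq_mulVec] at this; simpa using this
  have hdet : A * D - B * C = 1 := mq_det k
  have hst : s * t = 1 := by
    have h5 : (s * t) * (v 0 * w 1 - v 1 * w 0) = 1 * (v 0 * w 1 - v 1 * w 0) := by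
      linear_combination -((t * w 1) * e1 - (t * w 0) * e2 + (A * v 0 + B * v 1) * e4 -
        (C * v 0 + D * v 1) * e3) + (v 0 * w 1 - v 1 * w 0) * hdet
    exact mul_right_cancel₀ hvw h5
  have htr : s + t = A + D := by
    have h5 : (s + t) * (v 0 * w 1 - v 1 * w 0) = (A + D) * (v 0 * w 1 - v 1 * w 0) := by
      linear_combination -((w 1) * e1 - (w 0) * e2 + (v 0) * e4 - (v 1) * e3)
    exact mul_right_cancel₀ hvw h5
  have hT : ((k.1 0 0 + k.1 1 1 : ℤ) : ℚ) = s + t := by push_cast; rw [htr]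
  have hpoly : s^2 - ((k.1 0 0 + k.1 1 1 : ℤ) : ℚ) * s + 1 = 0 := by
    rw [hT]; linear_combination -hst
  rcases rat_root _ _ hpoly with hs1 | hs1
  · have ht1 : t = 1 := by rw [hs1] at hst; linarith
    rw [hs1] at e1 e2; rw [ht1] at e3 e4
    have hA1 : A = 1 := by
      have h5 : (A - 1) * (v 0 * w 1 - v 1 * w 0) = 0 := by
        linear_combination (w 1) * e1 - (v 1) * e3
      rcases mul_eq_zero.mp h5 with h6 | h6
      · linarith
      · exact absurd h6 hvw
    have hB1 : B = 0 := by
      have h5 : B * (v 0 * w 1 - v 1 * w 0) = 0 := by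
        linear_combination (v 0) * e3 - (w 0) * e1
      rcases mul_eq_zero.mp h5 with h6 | h6
      · exact h6
      · exact absurd h6 hvw
    have hC1 : C = 0 := by
      have h5 : C * (v 0 * w 1 - v 1 * w 0) = 0 := by
        linear_combination (w 1) * e2 - (v 1) * e4
      rcases mul_eq_zero.mp h5 with h6 | h6
      · exact h6
      · exact absurd h6 hvw
    have hD1 : D = 1 := by
      have h5 : (D - 1) * (v 0 * w 1 - v 1 * w 0) = 0 := by
        linear_combination (v 0) * e4 - (w 0) * e2
      rcases mul_eq_zero.mp h5 with h6 | h6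
      · linarith
      · exact absurd h6 hvw
    left
    rw [hA] at hA1; rw [hB] at hB1; rw [hC] at hC1; rw [hD] at hD1
    have ha : k.1 0 0 = 1 := by exact_mod_cast hA1
    have hb : k.1 0 1 = 0 := by exact_mod_cast hB1
    have hc : k.1 1 0 = 0 := by exact_mod_cast hC1
    have hd : k.1 1 1 = 1 := by exact_mod_cast hD1
    apply Subtype.ext
    ext i j
    fin_cases i <;> fin_cases j <;>
      simp [ha, hb, hc, hd, Matrix.one_apply]
  · have ht1 : t = -1 := by rw [hs1] at hst; linarith
    rw [hs1] at e1 e2; rw [ht1] at e3 e4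
    have hA1 : A = -1 := by
      have h5 : (A + 1) * (v 0 * w 1 - v 1 * w 0) = 0 := by
        linear_combination (w 1) * e1 - (v 1) * e3
      rcases mul_eq_zero.mp h5 with h6 | h6
      · linarith
      · exact absurd h6 hvw
    have hB1 : B = 0 := by
      have h5 : B * (v 0 * w 1 - v 1 * w 0) = 0 := by
        linear_combination (v 0) * e3 - (w 0) * e1
      rcases mul_eq_zero.mp h5 with h6 | h6
      · exact h6
      · exact absurd h6 hvw
    have hC1 : C = 0 := by
      have h5 : C * (v 0 * w 1 - v 1 * w 0) = 0 := by
        linear_combination (w 1) * e2 - (v 1) * e4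
      rcases mul_eq_zero.mp h5 with h6 | h6
      · exact h6
      · exact absurd h6 hvw
    have hD1 : D = -1 := by
      have h5 : (D + 1) * (v 0 * w 1 - v 1 * w 0) = 0 := by
        linear_combination (v 0) * e4 - (w 0) * e2
      rcases mul_eq_zero.mp h5 with h6 | h6
      · linarith
      · exact absurd h6 hvw
    right
    rw [hA] at hA1; rw [hB] at hB1; rw [hC] at hC1; rw [hD] at hD1
    have ha : k.1 0 0 = -1 := by exact_mod_cast hA1
    have hb : k.1 0 1 = 0 := by exact_mod_cast hB1
    have hc : k.1 1 0 = 0 := by exact_mod_cast hC1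
    have hd : k.1 1 1 = -1 := by exact_mod_cast hD1
    apply Subtype.ext
    ext i j
    fin_cases i <;> fin_cases j <;>
      simp [ha, hb, hc, hd, Matrix.one_apply]

lemma prop_key (g h : SL2) (v w : Fin 2 → ℚ) (s t : ℚ)
    (hvw : v 0 * w 1 - v 1 * w 0 ≠ 0)
    (hv : mq g *ᵥ v = s • (mq h *ᵥ v)) (hw : mq g *ᵥ w = t • (mq h *ᵥ w)) :
    g = h ∨ g = -h := by
  have key : ∀ (u : Fin 2 → ℚ) (r : ℚ), mq g *ᵥ u = r • (mq h *ᵥ u) →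
      mq (h⁻¹ * g) *ᵥ u = r • u := by
    intro u r hu
    have : mq (h⁻¹ * g) *ᵥ u = mq h⁻¹ *ᵥ (mq g *ᵥ u) := by
      rw [mq_mul, ← Matrix.mulVec_mulVec]
    rw [this, hu, Matrix.mulVec_smul, Matrix.mulVec_mulVec, ← mq_mul,
      inv_mul_cancel, mq_one, Matrix.one_mulVec]
  rcases eig_key (h⁻¹ * g) v w s t hvw (key v s hv) (key w t hw) with hk | hk
  · left
    have := congrArg (fun z => h * z) hk
    simpa [mul_assoc] using this
  · right
    have := congrArg (fun z => h * z) hk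
    simpa [mul_assoc] using this

lemma moebius_infty (g : SL2) : moebius g OnePoint.infty =
    (if (g.1 1 0 : ℤ) = 0 then OnePoint.infty
     else ((((g.1 0 0 : ℤ) : ℝ) / ((g.1 1 0 : ℤ) : ℝ) : ℝ) : OnePoint ℝ)) := rfl

lemma moebius_coe (g : SL2) (r : ℝ) : moebius g (r : OnePoint ℝ) =
    (if ((g.1 1 0 : ℤ) : ℝ) * r + ((g.1 1 1 : ℤ) : ℝ) = 0 then OnePoint.infty
     else (((((g.1 0 0 : ℤ) : ℝ) * r + ((g.1 0 1 : ℤ) : ℝ)) /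
           (((g.1 1 0 : ℤ) : ℝ) * r + ((g.1 1 1 : ℤ) : ℝ)) : ℝ) : OnePoint ℝ)) := rfl

lemma prop_infty (g h : SL2)
    (heq : moebius g OnePoint.infty = moebius h OnePoint.infty) :
    ∃ t : ℚ, mq g *ᵥ ![1, 0] = t • (mq h *ᵥ ![1, 0]) := by
  rw [moebius_infty, moebius_infty] at heq
  by_cases hc : g.1 1 0 = 0
  · by_cases hc' : h.1 1 0 = 0
    · have hg : g.1 0 0 * g.1 1 1 = 1 := by
        have := g.2; rw [Matrix.det_fin_two] at this; rw [hc] at this; linarith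
      have hh : h.1 0 0 * h.1 1 1 = 1 := by
        have := h.2; rw [Matrix.det_fin_two] at this; rw [hc'] at this; linarith
      rcases Int.mul_eq_one_iff_eq_one_or_neg_one.mp hg with ⟨ha, hd⟩ | ⟨ha, hd⟩ <;>
        rcases Int.mul_eq_one_iff_eq_one_or_neg_one.mp hh with ⟨ha', hd'⟩ | ⟨ha', hd'⟩ <;>
        [refine ⟨1, ?_⟩; refine ⟨-1, ?_⟩; refine ⟨-1, ?_⟩; refine ⟨1, ?_⟩] <;>
        funext i <;> fin_cases i <;>
        simp [mq_mulVec, mq, ha, ha', hc, hc']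
    · exfalso
      rw [if_pos hc, if_neg hc'] at heq
      exact OnePoint.infty_ne_coe _ heq
  · by_cases hc' : h.1 1 0 = 0
    · exfalso
      rw [if_neg hc, if_pos hc'] at heq
      exact OnePoint.coe_ne_infty _ heq
    · rw [if_neg hc, if_neg hc'] at heq
      have hre : ((g.1 0 0 : ℤ) : ℝ) / ((g.1 1 0 : ℤ) : ℝ) =
          ((h.1 0 0 : ℤ) : ℝ) / ((h.1 1 0 : ℤ) : ℝ) := by exact_mod_cast heq
      have hcR : ((g.1 1 0 : ℤ) : ℝ) ≠ 0 := by exact_mod_cast hc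
      have hcR' : ((h.1 1 0 : ℤ) : ℝ) ≠ 0 := by exact_mod_cast hc'
      have hcross : (g.1 0 0 : ℚ) * (h.1 1 0 : ℚ) = (h.1 0 0 : ℚ) * (g.1 1 0 : ℚ) := by
        field_simp at hre
        rw [mul_comm (h.1 0 0 : ℚ)]; exact_mod_cast hre
      have hcQ : ((g.1 1 0 : ℤ) : ℚ) ≠ 0 := by exact_mod_cast hc
      have hcQ' : ((h.1 1 0 : ℤ) : ℚ) ≠ 0 := by exact_mod_cast hc'
      refine ⟨(g.1 1 0 : ℚ) / (h.1 1 0 : ℚ), ?_⟩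
      funext i
      fin_cases i <;> simp [mq_mulVec, mq] <;> field_simp <;> linear_combination hcross

lemma prop_rat (g h : SL2) (q : ℚ)
    (heq : moebius g ((q : ℝ) : OnePoint ℝ) = moebius h ((q : ℝ) : OnePoint ℝ)) :
    ∃ t : ℚ, mq g *ᵥ ![q, 1] = t • (mq h *ᵥ ![q, 1]) := by
  rw [moebius_coe, moebius_coe] at heq
  have cast1 : ∀ (k : SL2), ((k.1 1 0 : ℤ) : ℝ) * (q:ℝ) + ((k.1 1 1 : ℤ) : ℝ) =
      (((k.1 1 0 : ℚ) * q + (k.1 1 1 : ℚ) : ℚ) : ℝ) := by intro k; push_cast; ring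
  have cast0 : ∀ (k : SL2), ((k.1 0 0 : ℤ) : ℝ) * (q:ℝ) + ((k.1 0 1 : ℤ) : ℝ) =
      (((k.1 0 0 : ℚ) * q + (k.1 0 1 : ℚ) : ℚ) : ℝ) := by intro k; push_cast; ring
  rw [cast1 g, cast1 h, cast0 g, cast0 h] at heq
  set Dg : ℚ := (g.1 1 0 : ℚ) * q + (g.1 1 1 : ℚ) with hDg
  set Dh : ℚ := (h.1 1 0 : ℚ) * q + (h.1 1 1 : ℚ) with hDh
  set Ng : ℚ := (g.1 0 0 : ℚ) * q + (g.1 0 1 : ℚ) with hNg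
  set Nh : ℚ := (h.1 0 0 : ℚ) * q + (h.1 0 1 : ℚ) with hNh
  have hdetg : ((g.1 0 0 : ℤ):ℚ) * ((g.1 1 1 : ℤ):ℚ) - ((g.1 0 1 : ℤ):ℚ) * ((g.1 1 0 : ℤ):ℚ) = 1 := mq_det g
  have hdeth : ((h.1 0 0 : ℤ):ℚ) * ((h.1 1 1 : ℤ):ℚ) - ((h.1 0 1 : ℤ):ℚ) * ((h.1 1 0 : ℤ):ℚ) = 1 := mq_det h
  by_cases hc : Dg = 0
  · by_cases hc' : Dh = 0
    · have hNgne : Ng ≠ 0 := by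
        intro hN
        have : (1:ℚ) = 0 := by
          rw [hDg] at hc; rw [hNg] at hN
          linear_combination (g.1 0 0 : ℚ) * hc - (g.1 1 0 : ℚ) * hN - hdetg
        norm_num at this
      have hNhne : Nh ≠ 0 := by
        intro hN
        have : (1:ℚ) = 0 := by
          rw [hDh] at hc'; rw [hNh] at hN
          linear_combination (h.1 0 0 : ℚ) * hc' - (h.1 1 0 : ℚ) * hN - hdeth
        norm_num at this
      refine ⟨Ng / Nh, ?_⟩
      funext i
      fin_cases i <;> simp [mq_mulVec, mq]
      · rw [div_mul_cancel₀ _ hNhne]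
      · rw [← hDg, ← hDh, hc, hc']; ring
    · exfalso
      have hcR : ((Dg : ℚ) : ℝ) = 0 := by rw [hc]; norm_num
      have hcR' : ((Dh : ℚ) : ℝ) ≠ 0 := by exact_mod_cast hc'
      rw [if_pos hcR, if_neg hcR'] at heq
      exact OnePoint.infty_ne_coe _ heq
  · by_cases hc' : Dh = 0
    · exfalso
      have hcR : ((Dg : ℚ) : ℝ) ≠ 0 := by exact_mod_cast hc
      have hcR' : ((Dh : ℚ) : ℝ) = 0 := by rw [hc']; norm_num
      rw [if_neg hcR, if_pos hcR'] at heq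
      exact OnePoint.coe_ne_infty _ heq
    · have hcR : ((Dg : ℚ) : ℝ) ≠ 0 := by exact_mod_cast hc
      have hcR' : ((Dh : ℚ) : ℝ) ≠ 0 := by exact_mod_cast hc'
      rw [if_neg hcR, if_neg hcR'] at heq
      have hre : ((Ng : ℚ) : ℝ) / ((Dg : ℚ) : ℝ) = ((Nh : ℚ) : ℝ) / ((Dh : ℚ) : ℝ) := by
        exact_mod_cast heq
      have hcross : Ng * Dh = Nh * Dg := by
        field_simp at hre
        rw [mul_comm Nh]; exact_mod_cast hre
      refine ⟨Dg / Dh, ?_⟩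
      funext i
      fin_cases i <;> simp [mq_mulVec, mq]
      · rw [div_mul_eq_mul_div, eq_div_iff hc']
        linear_combination hcross
      · rw [← hDg, ← hDh, div_mul_cancel₀ _ hc']


/-- An element of `PSL(2,ℤ)` is uniquely determined by its values on two distinct
points of `ℚ ∪ {∞}`: if two elements of `SL(2,ℤ)` act in the same way on two distinct
points of `ℚ ∪ {∞}`, then they agree up to sign, i.e. they define the same element
of `PSL(2,ℤ)`. -/
theorem moebius_eq_of_two_points (g h : Matrix.SpecialLinearGroup (Fin 2) ℤ)
    (x y : OnePoint ℝ) (hx : x ∈ RatOrInf) (hy : y ∈ RatOrInf) (hxy : x ≠ y)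
    (h1 : moebius g x = moebius h x) (h2 : moebius g y = moebius h y) :
    g = h ∨ g = -h := by
  rcases hx with hx | ⟨qx, hx⟩ <;> rcases hy with hy | ⟨qy, hy⟩
  · exfalso; rw [hx, hy] at hxy; exact hxy rfl
  · rw [hx] at h1; rw [hy] at h2
    obtain ⟨s, hs⟩ := prop_infty g h h1
    obtain ⟨t, ht⟩ := prop_rat g h qy h2
    refine prop_key g h ![1, 0] ![qy, 1] s t ?_ hs ht
    norm_num
  · rw [hx] at h1; rw [hy] at h2
    obtain ⟨s, hs⟩ := prop_rat g h qx h1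
    obtain ⟨t, ht⟩ := prop_infty g h h2
    refine prop_key g h ![qx, 1] ![1, 0] s t ?_ hs ht
    norm_num
  · rw [hx] at h1; rw [hy] at h2
    have hq : qx ≠ qy := by
      intro e; apply hxy; rw [hx, hy, e]
    obtain ⟨s, hs⟩ := prop_rat g h qx h1
    obtain ⟨t, ht⟩ := prop_rat g h qy h2
    refine prop_key g h ![qx, 1] ![qy, 1] s t ?_ hs ht
    simpa using sub_ne_zero.mpr hq
end
end
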